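/- arXiv:2209.01623 — 2 statements merged into one kernel-verified Lean document; each statement's English description precedes it below -/
import Mathlib

section
/- Let L, R, T be finite sets, f : L × R → T, and let P = {(A_1,B_1,k_1),…,(A_m,B_m,k_m)} be a cyclic partition of f with relabeling functions σ_{A,i}, σ_{B,i}, σ_{C,i}. Then for every n ≥ 1, every g : L^n → ℤ, every h : R^n → ℤ, and every v ∈ T^n, it holds that (g ⊛_f h)(v) = Σ_{p ∈ [m]^n} Σ_{q ∈ Z_p} [σ^T_p(q) = v] · (g_p ⊙ h_p)(q), where g_p, h_p are the projections of g and h with respect to the type p, and ⊙ denotes the cyclic convolution on Z_p. -/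
open Finset

/-- The `f`-convolution of `g : L^n → ℤ` and `h : R^n → ℤ`, evaluated at `v ∈ T^n`:
`(g ⊛_f h)(v) = Σ_{u, w : u ⊕_f w = v} g(u) · h(w)`. -/
def fConv {L R T : Type*} [Fintype L] [Fintype R] [DecidableEq T] {n : ℕ}
    (f : L × R → T) (g : (Fin n → L) → ℤ) (h : (Fin n → R) → ℤ)
    (v : Fin n → T) : ℤ :=
  ∑ u : Fin n → L, ∑ w : Fin n → R,
    if ∀ j, f (u j, w j) = v j then g u * h w else 0

/-- The projection `g_p` of `g : L^n → ℤ` with respect to the type `p ∈ [m]^n`. -/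
def projL {L : Type*} [Fintype L] [DecidableEq L] {m n : ℕ}
    (A : Fin m → Finset L) (k : Fin m → ℕ)
    (σA : (i : Fin m) → L → Fin (k i)) (g : (Fin n → L) → ℤ)
    (p : Fin n → Fin m) (q : (j : Fin n) → Fin (k (p j))) : ℤ :=
  ∑ u : Fin n → L,
    if (∀ j, u j ∈ A (p j)) ∧ (∀ j, σA (p j) (u j) = q j) then g u else 0

/-- The projection `h_p` of `h : R^n → ℤ` with respect to the type `p ∈ [m]^n`. -/
def projR {R : Type*} [Fintype R] [DecidableEq R] {m n : ℕ}
    (B : Fin m → Finset R) (k : Fin m → ℕ)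
    (σB : (i : Fin m) → R → Fin (k i)) (h : (Fin n → R) → ℤ)
    (p : Fin n → Fin m) (q : (j : Fin n) → Fin (k (p j))) : ℤ :=
  ∑ w : Fin n → R,
    if (∀ j, w j ∈ B (p j)) ∧ (∀ j, σB (p j) (w j) = q j) then h w else 0

/-- Cyclic convolution `a ⊙ b` on `Z_p = ℤ_{k_{p_1}} × … × ℤ_{k_{p_n}}`, where addition
`+_p` is coordinatewise addition modulo `k_{p_j}` (the addition of `Fin (k (p j))`). -/
def cycConv {m n : ℕ} (k : Fin m → ℕ) (p : Fin n → Fin m)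
    (a b : ((j : Fin n) → Fin (k (p j))) → ℤ)
    (q : (j : Fin n) → Fin (k (p j))) : ℤ :=
  ∑ r : (j : Fin n) → Fin (k (p j)), ∑ s : (j : Fin n) → Fin (k (p j)),
    if ∀ j, r j + s j = q j then a r * b s else 0

/-- Collapse a sum over a dependent-function space against a pointwise-equality condition. -/
lemma pi_sum_collapse {n : ℕ} {α : Fin n → Type*} [∀ j, Fintype (α j)]
    [∀ j, DecidableEq (α j)] (y : ∀ j, α j) (F : (∀ j, α j) → ℤ) :
    (∑ x : ∀ j, α j, if ∀ j, y j = x j then F x else 0) = F y := by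
  have key : ∀ x : ∀ j, α j, (∀ j, y j = x j) ↔ y = x := fun x => funext_iff.symm
  simp only [key]
  exact Fintype.sum_ite_eq y F

/-- Collapse a sum over a dependent-function space against a pointwise-equality condition,
with an additional predicate. -/
lemma pi_sum_collapse_and {n : ℕ} {α : Fin n → Type*} [∀ j, Fintype (α j)]
    [∀ j, DecidableEq (α j)] (y : ∀ j, α j) (P : (∀ j, α j) → Prop) [DecidablePred P]
    (F : (∀ j, α j) → ℤ) :
    (∑ x : ∀ j, α j, if (∀ j, y j = x j) ∧ P x then F x else 0) =
      if P y then F y else 0 := by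
  have key : ∀ x : ∀ j, α j, ((∀ j, y j = x j) ∧ P x) ↔ (y = x ∧ P x) := by
    intro x; rw [funext_iff]
  simp only [key, ite_and]
  exact Fintype.sum_ite_eq y (fun x => if P x then F x else 0)

lemma my_sum_comm4 {α β γ δ : Type*} [Fintype α] [Fintype β] [Fintype γ] [Fintype δ]
    (F : α → β → γ → δ → ℤ) :
    ∑ a : α, ∑ b : β, ∑ c : γ, ∑ d : δ, F a b c d =
      ∑ c : γ, ∑ d : δ, ∑ a : α, ∑ b : β, F a b c d :=
  calc ∑ a : α, ∑ b : β, ∑ c : γ, ∑ d : δ, F a b c d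
      = ∑ a : α, ∑ c : γ, ∑ b : β, ∑ d : δ, F a b c d :=
        Finset.sum_congr rfl fun a _ => Finset.sum_comm
    _ = ∑ c : γ, ∑ a : α, ∑ b : β, ∑ d : δ, F a b c d := Finset.sum_comm
    _ = ∑ c : γ, ∑ a : α, ∑ d : δ, ∑ b : β, F a b c d :=
        Finset.sum_congr rfl fun c _ => Finset.sum_congr rfl fun a _ => Finset.sum_comm
    _ = ∑ c : γ, ∑ d : δ, ∑ a : α, ∑ b : β, F a b c d :=
        Finset.sum_congr rfl fun c _ => Finset.sum_comm

theorem fConv_eq_sum_types_cycConv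
    {L R T : Type*} [Fintype L] [Fintype R] [Fintype T]
    [DecidableEq L] [DecidableEq R] [DecidableEq T]
    {m n : ℕ} (hm : 1 ≤ m) (hn : 1 ≤ n)
    (f : L × R → T)
    (A : Fin m → Finset L) (B : Fin m → Finset R) (k : Fin m → ℕ)
    (hk : ∀ i, 1 ≤ k i)
    (σA : (i : Fin m) → L → Fin (k i)) (σB : (i : Fin m) → R → Fin (k i))
    (σC : (i : Fin m) → Fin (k i) → T)
    (hminor : ∀ i, ∀ a ∈ A i, ∀ b ∈ B i, f (a, b) = σC i (σA i a + σB i b))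
    (hpart : ∀ (a : L) (b : R), ∃! i : Fin m, a ∈ A i ∧ b ∈ B i)
    (g : (Fin n → L) → ℤ) (h : (Fin n → R) → ℤ) (v : Fin n → T) :
    fConv f g h v =
      ∑ p : Fin n → Fin m, ∑ q : (j : Fin n) → Fin (k (p j)),
        (if ∀ j, σC (p j) (q j) = v j then 1 else 0) *
          cycConv k p (projL A k σA g p) (projR B k σB h p) q := by
  classical
  -- Step 1: for each type `p`, rewrite the inner double sum as a sum over `u, w`.
  have step1 : ∀ p : Fin n → Fin m,
      (∑ q : (j : Fin n) → Fin (k (p j)),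
        (if ∀ j, σC (p j) (q j) = v j then 1 else 0) *
          cycConv k p (projL A k σA g p) (projR B k σB h p) q)
      = ∑ u : Fin n → L, ∑ w : Fin n → R,
          if ((∀ j, u j ∈ A (p j)) ∧ (∀ j, w j ∈ B (p j))) ∧
             (∀ j, σC (p j) (σA (p j) (u j) + σB (p j) (w j)) = v j)
          then g u * h w else 0 := by
    intro p
    unfold cycConv projL projR
    -- collapse the sum over q
    have e1 : (∑ q : (j : Fin n) → Fin (k (p j)),
        (if ∀ j, σC (p j) (q j) = v j then 1 else 0) *
          (∑ r : (j : Fin n) → Fin (k (p j)), ∑ s : (j : Fin n) → Fin (k (p j)),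
            if ∀ j, r j + s j = q j then
              (∑ u : Fin n → L,
                if (∀ j, u j ∈ A (p j)) ∧ (∀ j, σA (p j) (u j) = r j) then g u else 0) *
              (∑ w : Fin n → R,
                if (∀ j, w j ∈ B (p j)) ∧ (∀ j, σB (p j) (w j) = s j) then h w else 0)
            else 0))
        = ∑ r : (j : Fin n) → Fin (k (p j)), ∑ s : (j : Fin n) → Fin (k (p j)),
            (if ∀ j, σC (p j) (r j + s j) = v j then 1 else 0) *
              ((∑ u : Fin n → L,
                if (∀ j, u j ∈ A (p j)) ∧ (∀ j, σA (p j) (u j) = r j) then g u else 0) *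
              (∑ w : Fin n → R,
                if (∀ j, w j ∈ B (p j)) ∧ (∀ j, σB (p j) (w j) = s j) then h w else 0)) := by
      have push : ∀ q : (j : Fin n) → Fin (k (p j)),
          (if ∀ j, σC (p j) (q j) = v j then 1 else 0) *
            (∑ r : (j : Fin n) → Fin (k (p j)), ∑ s : (j : Fin n) → Fin (k (p j)),
              if ∀ j, r j + s j = q j then
                (∑ u : Fin n → L,
                  if (∀ j, u j ∈ A (p j)) ∧ (∀ j, σA (p j) (u j) = r j) then g u else 0) *
                (∑ w : Fin n → R,
                  if (∀ j, w j ∈ B (p j)) ∧ (∀ j, σB (p j) (w j) = s j) then h w else 0)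
              else 0)
          = ∑ r : (j : Fin n) → Fin (k (p j)), ∑ s : (j : Fin n) → Fin (k (p j)),
              if ∀ j, r j + s j = q j then
                (if ∀ j, σC (p j) (q j) = v j then 1 else 0) *
                ((∑ u : Fin n → L,
                  if (∀ j, u j ∈ A (p j)) ∧ (∀ j, σA (p j) (u j) = r j) then g u else 0) *
                (∑ w : Fin n → R,
                  if (∀ j, w j ∈ B (p j)) ∧ (∀ j, σB (p j) (w j) = s j) then h w else 0))
              else 0 := by
        intro q
        rw [Finset.mul_sum]
        refine Finset.sum_congr rfl fun r _ => ?_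
        rw [Finset.mul_sum]
        refine Finset.sum_congr rfl fun s _ => ?_
        simp only [mul_ite, mul_zero]
      simp only [push]
      rw [Finset.sum_comm]
      refine Finset.sum_congr rfl fun r _ => ?_
      rw [Finset.sum_comm]
      refine Finset.sum_congr rfl fun s _ => ?_
      exact pi_sum_collapse (fun j => r j + s j) _
    rw [e1]
    -- expand the product of sums into a double sum over u, w
    have e2 : ∀ r s : (j : Fin n) → Fin (k (p j)),
        (if ∀ j, σC (p j) (r j + s j) = v j then 1 else 0) *
          ((∑ u : Fin n → L,
            if (∀ j, u j ∈ A (p j)) ∧ (∀ j, σA (p j) (u j) = r j) then g u else 0) *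
          (∑ w : Fin n → R,
            if (∀ j, w j ∈ B (p j)) ∧ (∀ j, σB (p j) (w j) = s j) then h w else 0))
        = ∑ u : Fin n → L, ∑ w : Fin n → R,
            if (∀ j, σB (p j) (w j) = s j) ∧ ((∀ j, σA (p j) (u j) = r j) ∧
               ((∀ j, u j ∈ A (p j)) ∧ ((∀ j, w j ∈ B (p j)) ∧
                (∀ j, σC (p j) (r j + s j) = v j))))
            then g u * h w else 0 := by
      intro r s
      rw [Finset.sum_mul_sum, Finset.mul_sum]
      refine Finset.sum_congr rfl fun u _ => ?_
      rw [Finset.mul_sum]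
      refine Finset.sum_congr rfl fun w _ => ?_
      by_cases h1 : (∀ j, σC (p j) (r j + s j) = v j) <;>
        by_cases h2 : (∀ j, u j ∈ A (p j)) <;>
        by_cases h3 : (∀ j, σA (p j) (u j) = r j) <;>
        by_cases h4 : (∀ j, w j ∈ B (p j)) <;>
        by_cases h5 : (∀ j, σB (p j) (w j) = s j) <;>
        simp [h1, h2, h3, h4, h5]
    simp only [e2]
    rw [my_sum_comm4]
    refine Finset.sum_congr rfl fun u _ => Finset.sum_congr rfl fun w _ => ?_
    -- collapse the sums over r and s
    have e3 : ∀ r : (j : Fin n) → Fin (k (p j)),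
        (∑ s : (j : Fin n) → Fin (k (p j)),
          if (∀ j, σB (p j) (w j) = s j) ∧ ((∀ j, σA (p j) (u j) = r j) ∧
             ((∀ j, u j ∈ A (p j)) ∧ ((∀ j, w j ∈ B (p j)) ∧
              (∀ j, σC (p j) (r j + s j) = v j))))
          then g u * h w else 0)
        = if (∀ j, σA (p j) (u j) = r j) ∧
             ((∀ j, u j ∈ A (p j)) ∧ ((∀ j, w j ∈ B (p j)) ∧
              (∀ j, σC (p j) (r j + σB (p j) (w j)) = v j)))
          then g u * h w else 0 := by
      intro r
      exact pi_sum_collapse_and (fun j => σB (p j) (w j)) _ _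
    simp only [e3]
    rw [pi_sum_collapse_and (fun j => σA (p j) (u j)) _ _]
    by_cases h2 : (∀ j, u j ∈ A (p j)) <;>
      by_cases h4 : (∀ j, w j ∈ B (p j)) <;>
      by_cases h1 : (∀ j, σC (p j) (σA (p j) (u j) + σB (p j) (w j)) = v j) <;>
      simp [h1, h2, h4]
  simp only [step1]
  unfold fConv
  conv_rhs => rw [Finset.sum_comm]
  refine Finset.sum_congr rfl fun u _ => ?_
  conv_rhs => rw [Finset.sum_comm]
  refine Finset.sum_congr rfl fun w _ => ?_
  -- collapse the sum over p using the uniqueness of the cyclic minor containing each pair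
  set p0 : Fin n → Fin m := fun j => (hpart (u j) (w j)).choose with hp0def
  have hmem : ∀ j, u j ∈ A (p0 j) ∧ w j ∈ B (p0 j) :=
    fun j => (hpart (u j) (w j)).choose_spec.1
  have huniq : ∀ (i : Fin m) (j : Fin n), u j ∈ A i → w j ∈ B i → i = p0 j :=
    fun i j h1 h2 => (hpart (u j) (w j)).choose_spec.2 i ⟨h1, h2⟩
  rw [Finset.sum_eq_single p0]
  · have key : (((∀ j, u j ∈ A (p0 j)) ∧ (∀ j, w j ∈ B (p0 j))) ∧
        (∀ j, σC (p0 j) (σA (p0 j) (u j) + σB (p0 j) (w j)) = v j)) ↔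
        (∀ j, f (u j, w j) = v j) := by
      constructor
      · rintro ⟨⟨hA, hB⟩, hC⟩ j
        rw [hminor (p0 j) (u j) (hA j) (w j) (hB j)]
        exact hC j
      · intro hf
        refine ⟨⟨fun j => (hmem j).1, fun j => (hmem j).2⟩, fun j => ?_⟩
        rw [← hminor (p0 j) (u j) (hmem j).1 (w j) (hmem j).2]
        exact hf j
    exact if_congr key.symm rfl rfl
  · intro b _ hb
    rw [if_neg]
    rintro ⟨⟨hA, hB⟩, -⟩
    exact hb (funext fun j => huniq (b j) j (hA j) (hB j))
  · intro habs
    exact absurd (Finset.mem_univ p0) habs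
end

section
/- Let L, R, T be finite sets, f : L × R → T, and let {(A_i,B_i,k_i)}_{i∈[m]} be a cyclic partition of f with relabeling functions σ_{A,i}, σ_{B,i}, σ_{C,i}. Fix n ≥ 1, g : L^n → ℤ and h : R^n → ℤ. Suppose that for every type p ∈ [m]^n a function c_p : Z_p → ℤ satisfies c_p = g_p ⊙ h_p (the cyclic convolution of the projections of g and h with respect to p), and define r : T^n → ℤ by r(v) = Σ_{p ∈ [m]^n} Σ_{q ∈ Z_p with σ^T_p(q) = v} c_p(q). Then r = g ⊛_f h. -/
open Finset

private lemma ite_sum {α : Type*} [Fintype α] (b : Prop) [Decidable b] (f : α → ℤ) :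
    (if b then ∑ x : α, f x else 0) = ∑ x : α, if b then f x else 0 := by
  split <;> simp

private lemma sum_ite_collapse {α : Type*} [Fintype α] (t : α) (P : α → Prop)
    [DecidablePred P] (F : α → ℤ) (hP : ∀ x, P x → x = t) :
    (∑ x : α, if P x then F x else 0) = if P t then F t else 0 := by
  rw [Finset.sum_eq_single t]
  · intro b _ hb
    exact if_neg fun hPb => hb (hP b hPb)
  · intro ht; exact absurd (Finset.mem_univ t) ht

/-- Correctness of the cyclic partition algorithm: if `c_p = g_p ⊙ h_p` for every type
`p`, and `r(v) = Σ_{p} Σ_{q ∈ Z_p, σ^T_p(q) = v} c_p(q)`, then `r = g ⊛_f h`. -/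
theorem algorithm_correct
    {L R T : Type*} [Fintype L] [Fintype R] [Fintype T]
    [DecidableEq L] [DecidableEq R] [DecidableEq T]
    {m n : ℕ} (hm : 1 ≤ m) (hn : 1 ≤ n)
    (f : L × R → T)
    (A : Fin m → Finset L) (B : Fin m → Finset R) (k : Fin m → ℕ)
    (hk : ∀ i, 1 ≤ k i)
    (σA : (i : Fin m) → L → Fin (k i)) (σB : (i : Fin m) → R → Fin (k i))
    (σC : (i : Fin m) → Fin (k i) → T)
    (hminor : ∀ i, ∀ a ∈ A i, ∀ b ∈ B i, f (a, b) = σC i (σA i a + σB i b))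
    (hpart : ∀ (a : L) (b : R), ∃! i : Fin m, a ∈ A i ∧ b ∈ B i)
    (g : (Fin n → L) → ℤ) (h : (Fin n → R) → ℤ)
    (c : (p : Fin n → Fin m) → ((j : Fin n) → Fin (k (p j))) → ℤ)
    (hc : ∀ p q, c p q = cycConv k p (projL A k σA g p) (projR B k σB h p) q)
    (r : (Fin n → T) → ℤ)
    (hr : ∀ v, r v = ∑ p : Fin n → Fin m, ∑ q : (j : Fin n) → Fin (k (p j)),
        if ∀ j, σC (p j) (q j) = v j then c p q else 0) :
    r = fConv f g h := by

  classical
  have hcpq : ∀ (p : Fin n → Fin m) (q : (j : Fin n) → Fin (k (p j))),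
      c p q = ∑ u : Fin n → L, ∑ w : Fin n → R,
        if (∀ j, u j ∈ A (p j)) ∧ (∀ j, w j ∈ B (p j)) ∧
            (∀ j, σA (p j) (u j) + σB (p j) (w j) = q j)
          then g u * h w else 0 := by
    intro p q
    rw [hc, cycConv]
    simp only [projL, projR, Finset.sum_mul, Finset.mul_sum, ite_sum, ite_mul, mul_ite,
      mul_zero, zero_mul, ← ite_and]
    -- current order (r, s, w, u); reorder to (u, w, r, s)
    conv_lhs => enter [2, r, 2, s]; rw [Finset.sum_comm]
    conv_lhs => enter [2, r]; rw [Finset.sum_comm]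
    rw [Finset.sum_comm]
    conv_lhs => enter [2, u, 2, r]; rw [Finset.sum_comm]
    conv_lhs => enter [2, u]; rw [Finset.sum_comm]
    refine Finset.sum_congr rfl fun u _ => Finset.sum_congr rfl fun w _ => ?_
    refine (Finset.sum_congr rfl fun x _ => sum_ite_collapse (fun j => σB (p j) (w j))
      (fun s => (∀ j, x j + s j = q j) ∧ ((∀ j, w j ∈ B (p j)) ∧ ∀ j, σB (p j) (w j) = s j) ∧
        (∀ j, u j ∈ A (p j)) ∧ ∀ j, σA (p j) (u j) = x j)
      (fun _ => g u * h w) (fun s hs => (funext fun j => hs.2.1.2 j).symm)).trans ?_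
    refine (sum_ite_collapse (fun j => σA (p j) (u j))
      (fun x => (∀ j, x j + σB (p j) (w j) = q j) ∧
        ((∀ j, w j ∈ B (p j)) ∧ ∀ j, σB (p j) (w j) = σB (p j) (w j)) ∧
        (∀ j, u j ∈ A (p j)) ∧ ∀ j, σA (p j) (u j) = x j)
      (fun _ => g u * h w) (fun x hx => (funext fun j => hx.2.2.2 j).symm)).trans ?_
    refine if_congr ⟨?_, ?_⟩ rfl rfl
    · rintro ⟨h1, ⟨h2, -⟩, h3, -⟩; exact ⟨h3, h2, h1⟩
    · rintro ⟨h3, h2, h1⟩; exact ⟨h1, ⟨h2, fun j => rfl⟩, h3, fun j => rfl⟩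
  funext v
  rw [hr, fConv]
  simp only [hcpq, ite_sum, ← ite_and]
  conv_lhs => enter [2, p]; rw [Finset.sum_comm]
  conv_lhs => enter [2, p, 2, u]; rw [Finset.sum_comm]
  have step2 : ∀ (p : Fin n → Fin m) (u : Fin n → L) (w : Fin n → R),
      (∑ x : (j : Fin n) → Fin (k (p j)), if (∀ j, σC (p j) (x j) = v j) ∧
          (∀ j, u j ∈ A (p j)) ∧ (∀ j, w j ∈ B (p j)) ∧
          (∀ j, σA (p j) (u j) + σB (p j) (w j) = x j) then g u * h w else 0)
      = if (∀ j, σC (p j) (σA (p j) (u j) + σB (p j) (w j)) = v j) ∧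
          (∀ j, u j ∈ A (p j)) ∧ (∀ j, w j ∈ B (p j)) then g u * h w else 0 := by
    intro p u w
    refine (sum_ite_collapse (fun j => σA (p j) (u j) + σB (p j) (w j)) _ _
      (fun x hx => (funext fun j => hx.2.2.2 j).symm)).trans ?_
    refine if_congr ⟨?_, ?_⟩ rfl rfl
    · rintro ⟨h1, h2, h3, -⟩; exact ⟨h1, h2, h3⟩
    · rintro ⟨h1, h2, h3⟩; exact ⟨h1, h2, h3, fun j => rfl⟩
  simp only [step2]
  rw [Finset.sum_comm]
  conv_lhs => enter [2, u]; rw [Finset.sum_comm]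
  refine Finset.sum_congr rfl fun u _ => Finset.sum_congr rfl fun w _ => ?_
  have hch : ∀ j, ∃ i, u j ∈ A i ∧ w j ∈ B i := fun j => (hpart (u j) (w j)).exists
  refine (sum_ite_collapse (fun j => (hch j).choose) _ _
      (fun p hp => funext fun j =>
        (hpart (u j) (w j)).unique ⟨hp.2.1 j, hp.2.2 j⟩ (hch j).choose_spec)).trans ?_
  refine if_congr ⟨?_, ?_⟩ rfl rfl
  · rintro ⟨h1, h2, h3⟩
    intro j
    rw [hminor _ _ (h2 j) _ (h3 j)]
    exact h1 j
  · intro hv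
    refine ⟨fun j => ?_, fun j => (hch j).choose_spec.1, fun j => (hch j).choose_spec.2⟩
    rw [← hminor _ _ (hch j).choose_spec.1 _ (hch j).choose_spec.2]
    exact hv j
end
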